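/- arXiv:2309.07049 — 3 statements merged into one kernel-verified Lean document; each statement's English description precedes it below -/
import Mathlib

section
/- Let a < b, let C : ℝ² → ℝ be a prescribed boundary function, and g : ℝ² → ℝ arbitrary. Define the TFC constrained expression u = g − T_Ω g + T_Ω C, where T_Ω = T¹ − T² is the 2D TFC operator defined via the linear switching functions φ. Then u(x) = C(x) for every x on the boundary of [a,b]² (i.e., whenever x₁ ∈ {a,b} or x₂ ∈ {a,b} with the other coordinate in [a,b]). -/
noncomputable def T1 (a b : ℝ) (f : ℝ → ℝ → ℝ) (x₁ x₂ : ℝ) : ℝ :=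
  ((b - x₁) / (b - a)) * f a x₂ + ((x₁ - a) / (b - a)) * f b x₂
    + ((b - x₂) / (b - a)) * f x₁ a + ((x₂ - a) / (b - a)) * f x₁ b

noncomputable def T2 (a b : ℝ) (f : ℝ → ℝ → ℝ) (x₁ x₂ : ℝ) : ℝ :=
  ((b - x₁) * (b - x₂) / (b - a) ^ 2) * f a a
    + ((b - x₁) * (x₂ - a) / (b - a) ^ 2) * f a b
    + ((x₁ - a) * (b - x₂) / (b - a) ^ 2) * f b a
    + ((x₁ - a) * (x₂ - a) / (b - a) ^ 2) * f b b

lemma bdry (a b : ℝ) (hab : a < b) (f : ℝ → ℝ → ℝ) (x₁ x₂ : ℝ)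
    (h : x₁ = a ∨ x₁ = b ∨ x₂ = a ∨ x₂ = b) :
    T1 a b f x₁ x₂ - T2 a b f x₁ x₂ = f x₁ x₂ := by
  have hne : b - a ≠ 0 := sub_ne_zero.mpr hab.ne'
  rcases h with h | h | h | h <;> subst h <;> simp [T1, T2] <;> field_simp <;> ring

/-- The TFC constrained expression u = g − T_Ω g + T_Ω C equals C on the boundary of
[a,b]², for an arbitrary free function g. -/
theorem stmt_4 (a b : ℝ) (hab : a < b) (C g : ℝ → ℝ → ℝ) :
    ∀ x₁ x₂ : ℝ,
      (((x₁ = a ∨ x₁ = b) ∧ x₂ ∈ Set.Icc a b) ∨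
       ((x₂ = a ∨ x₂ = b) ∧ x₁ ∈ Set.Icc a b)) →
      g x₁ x₂ - (T1 a b g x₁ x₂ - T2 a b g x₁ x₂)
        + (T1 a b C x₁ x₂ - T2 a b C x₁ x₂) = C x₁ x₂ := by
  intro x₁ x₂ h
  have h' : x₁ = a ∨ x₁ = b ∨ x₂ = a ∨ x₂ = b := by tauto
  rw [bdry a b hab g x₁ x₂ h', bdry a b hab C x₁ x₂ h']
  ring
end

section
/- Let a < b and let A f(x₁,x₂) = ((b−x₁)/(b−a))f(a,x₂) + ((x₁−a)/(b−a))f(b,x₂) + ((b−x₂)/(b−a))f(x₁,a) + ((x₂−a)/(b−a))f(x₁,b) be the 2D A-TFC (first-order truncated TFC) operator. For functions C, g : ℝ² → ℝ define u = g − A g + A C. Then for every x₁ ∈ ℝ, u(x₁, a) − C(x₁, a) = (C(a,a) − g(a,a))·(b−x₁)/(b−a) + (C(b,a) − g(b,a))·(x₁−a)/(b−a). -/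
/-- The 2D A-TFC operator (first-order truncation of the TFC operator). -/
noncomputable def ATFC2 (a b : ℝ) (f : ℝ → ℝ → ℝ) (x₁ x₂ : ℝ) : ℝ :=
  ((b - x₁) / (b - a)) * f a x₂ + ((x₁ - a) / (b - a)) * f b x₂
    + ((b - x₂) / (b - a)) * f x₁ a + ((x₂ - a) / (b - a)) * f x₁ b

/-- Boundary residual of the A-TFC constrained expression u = g − A g + A C on the edge
x₂ = a. -/
theorem stmt_5 (a b : ℝ) (hab : a < b) (C g : ℝ → ℝ → ℝ) :
    ∀ x₁ : ℝ,
      (g x₁ a - ATFC2 a b g x₁ a + ATFC2 a b C x₁ a) - C x₁ a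
        = (C a a - g a a) * ((b - x₁) / (b - a))
          + (C b a - g b a) * ((x₁ - a) / (b - a)) := by
  intro x₁
  have h : b - a ≠ 0 := sub_ne_zero.mpr hab.ne'
  unfold ATFC2
  field_simp
  ring
end

section
/- Let a < b and let A be the 2D A-TFC operator of the previous context. For C, g : ℝ² → ℝ define u = g − A g + A C. Then u(x) = C(x) for all x on the boundary of [a,b]² if and only if g agrees with C at the four corners: g(a,a) = C(a,a), g(a,b) = C(a,b), g(b,a) = C(b,a), and g(b,b) = C(b,b). -/
/-- The A-TFC constrained expression u = g − A g + A C equals C on the boundary of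
[a,b]² if and only if g agrees with C at the four corners. -/
theorem stmt_6 (a b : ℝ) (hab : a < b) (C g : ℝ → ℝ → ℝ) :
    (∀ x₁ x₂ : ℝ,
        (((x₁ = a ∨ x₁ = b) ∧ x₂ ∈ Set.Icc a b) ∨
         ((x₂ = a ∨ x₂ = b) ∧ x₁ ∈ Set.Icc a b)) →
        g x₁ x₂ - ATFC2 a b g x₁ x₂ + ATFC2 a b C x₁ x₂ = C x₁ x₂) ↔
    (g a a = C a a ∧ g a b = C a b ∧ g b a = C b a ∧ g b b = C b b) := by
  have hba : b - a ≠ 0 := sub_ne_zero.mpr hab.ne'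
  constructor
  · intro h
    have haa := h a a (Or.inl ⟨Or.inl rfl, le_refl a, hab.le⟩)
    have hab' := h a b (Or.inl ⟨Or.inl rfl, hab.le, le_refl b⟩)
    have hba' := h b a (Or.inl ⟨Or.inr rfl, le_refl a, hab.le⟩)
    have hbb := h b b (Or.inl ⟨Or.inr rfl, hab.le, le_refl b⟩)
    simp only [ATFC2] at haa hab' hba' hbb
    rw [div_self hba] at haa hab' hba' hbb
    simp only [sub_self, zero_div, zero_mul, one_mul] at haa hab' hba' hbb
    exact ⟨by linarith, by linarith, by linarith, by linarith⟩
  · rintro ⟨h1, h2, h3, h4⟩ x₁ x₂ hx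
    rcases hx with ⟨h5 | h5, _⟩ | ⟨h5 | h5, _⟩ <;> subst h5 <;>
      simp only [ATFC2, h1, h2, h3, h4] <;> field_simp <;> ring
end
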